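/- Let q ≥ 1 be an integer and for y ∈ ℝ^d, r > 0 let S_q(y,r) = y + (S_q ∩ {x_d ≤ r}) denote the translated truncated simplicial cusp, where S_q = {x ∈ ℝ^d : 0 ≤ x_1 ≤ ⋯ ≤ x_{d-1} ≤ x_d^q}. There exists a universal constant c > 0 such that for all sufficiently small r_1, r_2 > 0 and all y_1, y_2 ∈ ℝ^d: if |y_1 − y_2| < c · min{r_1^q, r_2^q}, then S_q(y_1,r_1) ∩ S_q(y_2,r_2) ≠ ∅. -/

import Mathlib

/-- The simplicial cusp `S_q = {x ∈ ℝ^{m+1} : 0 ≤ x_1 ≤ ⋯ ≤ x_m ≤ x_{m+1}^q, x_{m+1} ≥ 0}`. -/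
def SqE (q m : ℕ) : Set (EuclideanSpace ℝ (Fin (m + 1))) :=
  {x | 0 ≤ x (Fin.last m) ∧ (∀ i : Fin m, 0 ≤ x i.castSucc) ∧
    (∀ i j : Fin m, i ≤ j → x i.castSucc ≤ x j.castSucc) ∧
    ∀ i : Fin m, x i.castSucc ≤ x (Fin.last m) ^ q}

lemma abs_coord_le_norm' {n : ℕ} (v : EuclideanSpace ℝ (Fin n)) (i : Fin n) :
    |v i| ≤ ‖v‖ := by
  rw [EuclideanSpace.norm_eq]
  calc |v i| = Real.sqrt (‖v i‖ ^ 2) := by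
        rw [Real.sqrt_sq_eq_abs]; simp [abs_abs]
    _ ≤ _ := by
        apply Real.sqrt_le_sqrt
        exact Finset.single_le_sum (f := fun j => ‖v j‖ ^ 2)
          (fun j _ => by positivity) (Finset.mem_univ i)

set_option maxHeartbeats 1000000 in
/-- there is a universal constant `c > 0` such that for all sufficiently small
`r₁, r₂ > 0` and all `y₁, y₂`, if `|y₁ - y₂| < c · min{r₁^q, r₂^q}` then the translated
truncated simplicial cusps `S_q(y₁,r₁)` and `S_q(y₂,r₂)` intersect. -/
theorem stmt13 (q m : ℕ) (hq : 1 ≤ q) :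
    ∃ c > (0 : ℝ), ∃ δ > (0 : ℝ), ∀ r₁ r₂ : ℝ, 0 < r₁ → r₁ ≤ δ → 0 < r₂ → r₂ ≤ δ →
      ∀ y₁ y₂ : EuclideanSpace ℝ (Fin (m + 1)),
        ‖y₁ - y₂‖ < c * min (r₁ ^ q) (r₂ ^ q) →
        ((fun x => y₁ + x) '' (SqE q m ∩ {x | x (Fin.last m) ≤ r₁}) ∩
          (fun x => y₂ + x) '' (SqE q m ∩ {x | x (Fin.last m) ≤ r₂})).Nonempty := by
  refine ⟨1 / (2 * 4 ^ q * (m + 2)), by positivity, 1, one_pos, ?_⟩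
  intro r₁ r₂ hr₁ hr₁' hr₂ hr₂' y₁ y₂ hy
  set v : EuclideanSpace ℝ (Fin (m + 1)) := y₁ - y₂ with hv
  set t : ℝ := min r₁ r₂ / 2 with ht
  set g : ℝ := (t / 2) ^ q / (m + 2) with hg
  have hmin0 : 0 < min r₁ r₂ := lt_min hr₁ hr₂
  have ht0 : 0 < t := by positivity
  have hg0 : 0 < g := by positivity
  have htle : t ≤ 1 / 2 := by
    have : min r₁ r₂ ≤ 1 := le_trans (min_le_left _ _) hr₁'
    simp only [ht]; linarith
  -- the key bound on ‖v‖
  have hminpow : min (r₁ ^ q) (r₂ ^ q) = (min r₁ r₂) ^ q := by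
    rcases le_total r₁ r₂ with h | h
    · rw [min_eq_left h, min_eq_left (pow_le_pow_left₀ hr₁.le h q)]
    · rw [min_eq_right h, min_eq_right (pow_le_pow_left₀ hr₂.le h q)]
  have hvg : ‖v‖ < g / 2 := by
    have : (1 : ℝ) / (2 * 4 ^ q * (m + 2)) * (min r₁ r₂) ^ q = g / 2 := by
      rw [hg, ht, div_pow, div_pow]
      have h4 : ((2:ℝ)^q) * (2^q) = 4^q := by
        rw [← mul_pow]; norm_num
      field_simp
      ring_nf
      rw [← h4]; ring
    rw [hminpow, this] at hy
    exact hy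
  have hgt : g ≤ t / 2 := by
    have h1 : (t / 2) ^ q ≤ t / 2 := by
      have h0 : (0:ℝ) ≤ t / 2 := by positivity
      exact pow_le_of_le_one h0 (by linarith) (by omega)
    have h2 : g ≤ (t / 2) ^ q := by
      rw [hg]
      apply div_le_self (by positivity)
      have : (1:ℝ) ≤ (m:ℝ) + 2 := by
        have : (0:ℝ) ≤ (m:ℝ) := Nat.cast_nonneg m
        linarith
      linarith
    linarith
  have hδt : ‖v‖ < t / 2 := lt_of_lt_of_le hvg (by linarith)
  have hcoord : ∀ i, |v i| < g / 2 := fun i => lt_of_le_of_lt (abs_coord_le_norm' v i) hvg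
  -- the common point
  set x₁ : EuclideanSpace ℝ (Fin (m + 1)) :=
    (WithLp.equiv 2 (Fin (m + 1) → ℝ)).symm
      (fun i => if i = Fin.last m then t else ((i : ℕ) + 1) * g) with hx₁
  have hx₁app : ∀ i, x₁ i = if i = Fin.last m then t else ((i : ℕ) + 1) * g := fun i => rfl
  have hlast : x₁ (Fin.last m) = t := by rw [hx₁app]; simp
  have hcs : ∀ i : Fin m, x₁ i.castSucc = ((i : ℕ) + 1) * g := by
    intro i
    rw [hx₁app, if_neg (Fin.castSucc_lt_last i).ne]
    simp
  have hvadd : ∀ i, (x₁ + v) i = x₁ i + v i := fun i => rfl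
  have hpowq : (t / 2) ^ q = ((m : ℝ) + 2) * g := by
    rw [hg]; field_simp
  have hub : ∀ i : Fin m, ((i : ℕ) + 1 : ℝ) * g ≤ ((m : ℝ)) * g := by
    intro i
    have : ((i : ℕ) + 1 : ℝ) ≤ (m : ℝ) := by
      have := i.isLt
      exact_mod_cast this
    nlinarith
  refine ⟨y₁ + x₁, ⟨x₁, ⟨⟨?_, ?_, ?_, ?_⟩, ?_⟩, rfl⟩, ⟨x₁ + v, ⟨⟨?_, ?_, ?_, ?_⟩, ?_⟩, ?_⟩⟩
  · rw [hlast]; exact ht0.le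
  · intro i; rw [hcs]; positivity
  · intro i j hij
    rw [hcs, hcs]
    have : ((i : ℕ) : ℝ) ≤ ((j : ℕ) : ℝ) := by exact_mod_cast hij
    nlinarith
  · intro i
    rw [hcs, hlast]
    have h1 : ((i : ℕ) + 1 : ℝ) * g ≤ ((m : ℝ) + 2) * g := by
      have := hub i; nlinarith
    have h2 : (t / 2) ^ q ≤ t ^ q := by
      apply pow_le_pow_left₀ (by positivity); linarith
    rw [← hpowq] at h1; linarith
  · rw [Set.mem_setOf_eq, hlast, ht]
    have := min_le_left r₁ r₂; linarith
  · rw [hvadd, hlast]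
    have := abs_lt.1 (hcoord (Fin.last m))
    linarith
  · intro i
    rw [hvadd, hcs]
    have h1 := abs_lt.1 (hcoord i.castSucc)
    nlinarith [hub i, i.isLt]
  · intro i j hij
    rw [hvadd, hvadd, hcs, hcs]
    rcases eq_or_lt_of_le hij with h | h
    · subst h; simp
    · have hnat : (i : ℕ) + 1 ≤ (j : ℕ) := h
      have : ((i : ℕ) + 1 : ℝ) ≤ ((j : ℕ) : ℝ) := by exact_mod_cast hnat
      have hi := abs_lt.1 (hcoord i.castSucc)
      have hj := abs_lt.1 (hcoord j.castSucc)
      nlinarith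
  · intro i
    rw [hvadd, hvadd, hcs, hlast]
    have hlastv := abs_lt.1 (hcoord (Fin.last m))
    have hiv := abs_lt.1 (hcoord i.castSucc)
    have hd : t / 2 ≤ t + v (Fin.last m) := by linarith
    have h2 : (t / 2) ^ q ≤ (t + v (Fin.last m)) ^ q :=
      pow_le_pow_left₀ (by positivity) hd q
    rw [hpowq] at h2
    have := hub i
    nlinarith
  · rw [Set.mem_setOf_eq, hvadd, hlast]
    have hlastv := abs_lt.1 (hcoord (Fin.last m))
    have : t + t / 2 ≤ min r₁ r₂ := by rw [ht]; linarith
    have := min_le_right r₁ r₂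
    linarith
  · rw [hv]; abel_nf
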